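/- For every positive integer n and m ≥ 1, ∑_{i=1}^n [n choose i]_q (-1)^{i-1} q^{binom(i,2)+mi} / (1-q^i)^m = ∑_{1 ≤ i_1 ≤ i_2 ≤ ⋯ ≤ i_m ≤ n} (q^{i_1}/(1-q^{i_1})) ⋯ (q^{i_m}/(1-q^{i_m})) (Dilcher's identity). -/

import Mathlib

open Finset

/-- The q-Pochhammer symbol `(a;q)_n = (1-a)(1-aq)⋯(1-aq^{n-1})`. -/
noncomputable def qPoch {K : Type*} [Field K] (q a : K) (n : ℕ) : K :=
  ∏ k ∈ Finset.range n, (1 - a * q ^ k)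

/-- The Gaussian binomial coefficient `[n choose i]_q = (q;q)_n / ((q;q)_i (q;q)_{n-i})`. -/
noncomputable def qBinom {K : Type*} [Field K] (q : K) (n i : ℕ) : K :=
  qPoch q q n / (qPoch q q i * qPoch q q (n - i))

/-- `wsum f m lo n = ∑_{lo ≤ i₁ ≤ i₂ ≤ ⋯ ≤ i_m ≤ n} f i₁ ⋯ f i_m`
(sum over weakly increasing `m`-tuples; the empty sum for `m = 0` is `1`). -/
noncomputable def wsum {K : Type*} [Field K] (f : ℕ → K) : ℕ → ℕ → ℕ → K
  | 0, _, _ => 1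
  | m + 1, lo, n => ∑ j ∈ Finset.Icc lo n, f j * wsum f m j n

section DilcherAux

variable {K : Type*} [Field K] {q : K}

lemma one_sub_pow_ne (hq : ∀ k : ℕ, 0 < k → q ^ k ≠ 1) {k : ℕ} (hk : 0 < k) :
    (1 : K) - q ^ k ≠ 0 :=
  sub_ne_zero.mpr fun h => hq k hk h.symm

lemma qPoch_qq_succ (n : ℕ) : qPoch q q (n + 1) = qPoch q q n * (1 - q ^ (n + 1)) := by
  unfold qPoch
  rw [Finset.prod_range_succ, ← pow_succ']

lemma qPoch_qq_zero : qPoch q q 0 = 1 := by simp [qPoch]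

lemma qPoch_qq_ne_zero (hq : ∀ k : ℕ, 0 < k → q ^ k ≠ 1) (n : ℕ) : qPoch q q n ≠ 0 := by
  unfold qPoch
  refine Finset.prod_ne_zero_iff.mpr fun k _ => ?_
  have h := one_sub_pow_ne hq (k := k + 1) k.succ_pos
  rwa [pow_succ'] at h

lemma qBinom_self (hq : ∀ k : ℕ, 0 < k → q ^ k ≠ 1) (n : ℕ) : qBinom q n n = 1 := by
  unfold qBinom
  rw [Nat.sub_self, qPoch_qq_zero, mul_one, div_self (qPoch_qq_ne_zero hq n)]

lemma qBinom_zero (hq : ∀ k : ℕ, 0 < k → q ^ k ≠ 1) (n : ℕ) : qBinom q n 0 = 1 := by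
  unfold qBinom
  rw [Nat.sub_zero, qPoch_qq_zero, one_mul, div_self (qPoch_qq_ne_zero hq n)]

/-- `[n,i] (1-q^{n+1}) = [n+1,i+1] (1-q^{i+1})` for `i ≤ n`. -/
lemma pascal1 (hq : ∀ k : ℕ, 0 < k → q ^ k ≠ 1) {n i : ℕ} (h : i ≤ n) :
    qBinom q n i * (1 - q ^ (n + 1)) = qBinom q (n + 1) (i + 1) * (1 - q ^ (i + 1)) := by
  unfold qBinom
  rw [show n + 1 - (i + 1) = n - i by omega, qPoch_qq_succ n, qPoch_qq_succ i]
  have h1 := qPoch_qq_ne_zero hq i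
  have h2 := qPoch_qq_ne_zero hq (n - i)
  have h3 := one_sub_pow_ne hq (k := i + 1) i.succ_pos
  field_simp

/-- `[n,i] (1-q^{n+1}) = [n+1,i] (1-q^{n-i+1})` for `i ≤ n`. -/
lemma pascal2 (hq : ∀ k : ℕ, 0 < k → q ^ k ≠ 1) {n i : ℕ} (h : i ≤ n) :
    qBinom q n i * (1 - q ^ (n + 1)) = qBinom q (n + 1) i * (1 - q ^ (n - i + 1)) := by
  unfold qBinom
  rw [show n + 1 - i = n - i + 1 by omega, qPoch_qq_succ n, qPoch_qq_succ (n - i)]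
  have h1 := qPoch_qq_ne_zero hq i
  have h2 := qPoch_qq_ne_zero hq (n - i)
  have h3 := one_sub_pow_ne hq (k := n - i + 1) (n - i).succ_pos
  field_simp

/-- Pascal's rule for Gaussian binomial coefficients. -/
lemma pascal (hq : ∀ k : ℕ, 0 < k → q ^ k ≠ 1) {n i : ℕ} (hi : 1 ≤ i) (hin : i ≤ n) :
    qBinom q (n + 1) i = qBinom q n i + q ^ (n + 1 - i) * qBinom q n (i - 1) := by
  have hd := one_sub_pow_ne hq (k := n + 1) n.succ_pos
  have h2 := pascal2 hq hin
  have h1 := pascal1 hq (n := n) (i := i - 1) (by omega)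
  rw [show i - 1 + 1 = i by omega] at h1
  have hpow : q ^ (n - i + 1) * q ^ i = q ^ (n + 1) := by
    rw [← pow_add]; congr 1; omega
  rw [show n + 1 - i = n - i + 1 by omega]
  refine mul_right_cancel₀ hd ?_
  have expand : (qBinom q n i + q ^ (n - i + 1) * qBinom q n (i - 1)) * (1 - q ^ (n + 1))
      = qBinom q (n + 1) i * (1 - q ^ (n - i + 1))
        + q ^ (n - i + 1) * (qBinom q (n + 1) i * (1 - q ^ i)) := by
    rw [add_mul, h2, mul_assoc, h1]
  rw [expand]
  linear_combination qBinom q (n + 1) i * hpow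

/-- The summand of Dilcher's sum. -/
noncomputable def Tq (q : K) (n m i : ℕ) : K :=
  qBinom q n i * (-1 : K) ^ (i - 1) * q ^ (i.choose 2 + m * i) / (1 - q ^ i) ^ m

lemma termB (hq : ∀ k : ℕ, 0 < k → q ^ k ≠ 1) (n k : ℕ) :
    Tq q (n + 1) (k + 1) (n + 1) = q ^ (n + 1) / (1 - q ^ (n + 1)) * Tq q (n + 1) k (n + 1) := by
  unfold Tq
  have e1 : (n + 1).choose 2 + (k + 1) * (n + 1) = ((n + 1).choose 2 + k * (n + 1)) + (n + 1) := by
    ring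
  rw [e1, pow_add, pow_succ]
  have hz := one_sub_pow_ne hq (k := n + 1) n.succ_pos
  have hzk : ((1 : K) - q ^ (n + 1)) ^ k ≠ 0 := pow_ne_zero _ hz
  field_simp
  ring

lemma termA (hq : ∀ k : ℕ, 0 < k → q ^ k ≠ 1) {n i : ℕ} (k : ℕ) (hi : 1 ≤ i) (hin : i ≤ n) :
    Tq q (n + 1) (k + 1) i
      = Tq q n (k + 1) i + q ^ (n + 1) / (1 - q ^ (n + 1)) * Tq q (n + 1) k i := by
  have hd := one_sub_pow_ne hq (k := n + 1) n.succ_pos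
  have hDi := one_sub_pow_ne hq (k := i) hi
  have hA : qBinom q n i = qBinom q (n + 1) i * (1 - q ^ (n - i + 1)) / (1 - q ^ (n + 1)) :=
    eq_div_of_mul_eq hd (pascal2 hq hin)
  unfold Tq
  rw [hA]
  have e1 : i.choose 2 + (k + 1) * i = (i.choose 2 + k * i) + i := by ring
  have e2 : q ^ (n + 1) = q ^ (n - i + 1) * q ^ i := by rw [← pow_add]; congr 1; omega
  rw [e1, pow_add, pow_succ, e2]
  have hd' : (1 : K) - q ^ (n - i + 1) * q ^ i ≠ 0 := by rw [← e2]; exact hd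
  have hDik : ((1 : K) - q ^ i) ^ k ≠ 0 := pow_ne_zero _ hDi
  have hd'' : (1 : K) - q * q ^ i * q ^ (n - i) ≠ 0 := by convert hd' using 2; ring
  field_simp
  ring_nf
  linear_combination (-(qBinom q (1 + n) i * q ^ i.choose 2 * q ^ (k * i) * q ^ i)) * mul_inv_cancel₀ hd''

lemma sum_rec (hq : ∀ k : ℕ, 0 < k → q ^ k ≠ 1) (n k : ℕ) :
    ∑ i ∈ Icc 1 (n + 1), Tq q (n + 1) (k + 1) i
      = (∑ i ∈ Icc 1 n, Tq q n (k + 1) i)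
        + q ^ (n + 1) / (1 - q ^ (n + 1)) * ∑ i ∈ Icc 1 (n + 1), Tq q (n + 1) k i := by
  rw [Finset.sum_Icc_succ_top (by omega), Finset.sum_Icc_succ_top (by omega), mul_add,
    Finset.mul_sum]
  have h1 : ∀ i ∈ Icc 1 n, Tq q (n + 1) (k + 1) i
      = Tq q n (k + 1) i + q ^ (n + 1) / (1 - q ^ (n + 1)) * Tq q (n + 1) k i := by
    intro i hi
    obtain ⟨hi1, hi2⟩ := Finset.mem_Icc.mp hi
    exact termA hq k hi1 hi2
  rw [Finset.sum_congr rfl h1, Finset.sum_add_distrib, termB hq n k]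
  ring

lemma Lzero (hq : ∀ k : ℕ, 0 < k → q ^ k ≠ 1) (n : ℕ) :
    ∑ i ∈ Icc 1 (n + 1), Tq q (n + 1) 0 i = 1 := by
  have Tq0 : ∀ N i : ℕ, Tq q N 0 i = qBinom q N i * (-1 : K) ^ (i - 1) * q ^ i.choose 2 := by
    intro N i; unfold Tq; simp
  have hsign : ∀ j : ℕ, 1 ≤ j → (-1 : K) ^ j = -(-1 : K) ^ (j - 1) := by
    intro j hj
    conv_lhs => rw [show j = (j - 1) + 1 by omega]
    rw [pow_succ]; ring
  induction n with
  | zero =>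
    rw [show Icc 1 1 = {1} by rfl, Finset.sum_singleton, Tq0]
    simp [qBinom_self hq]
  | succ n ih =>
    rw [Finset.sum_Icc_succ_top (by omega)]
    have step : ∀ i ∈ Icc 1 (n + 1), Tq q (n + 2) 0 i
        = Tq q (n + 1) 0 i
          + q ^ (n + 2 - i) * qBinom q (n + 1) (i - 1) * (-1 : K) ^ (i - 1) * q ^ i.choose 2 := by
      intro i hi
      obtain ⟨hi1, hi2⟩ := Finset.mem_Icc.mp hi
      rw [Tq0, Tq0, pascal hq hi1 (by omega)]
      ring
    rw [Finset.sum_congr rfl step, Finset.sum_add_distrib, ih]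
    -- reindex the second sum
    have reidx : ∑ i ∈ Icc 1 (n + 1),
        q ^ (n + 2 - i) * qBinom q (n + 1) (i - 1) * (-1 : K) ^ (i - 1) * q ^ i.choose 2
        = ∑ j ∈ range (n + 1),
            q ^ (n + 1 - j) * qBinom q (n + 1) j * (-1 : K) ^ j * q ^ (j.choose 2 + j) := by
      rw [← Finset.Ico_add_one_right_eq_Icc, Finset.sum_Ico_eq_sum_range]
      refine Finset.sum_congr (by congr 1) fun j hj => ?_
      rw [show 1 + j - 1 = j by omega, show n + 1 + 1 - (1 + j) = n + 1 - j by omega,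
        show (1 + j).choose 2 = j.choose 2 + j by
          rw [show 1 + j = j + 1 by omega]
          simp [Nat.choose_succ_succ, Nat.choose_one_right]; omega]
    rw [reidx]
    have simpl : ∀ j ∈ range (n + 1),
        q ^ (n + 1 - j) * qBinom q (n + 1) j * (-1 : K) ^ j * q ^ (j.choose 2 + j)
          = q ^ (n + 1) * (qBinom q (n + 1) j * (-1 : K) ^ j * q ^ j.choose 2) := by
      intro j hj
      have hj' : j < n + 1 := by simpa using hj
      have hpw : q ^ (n + 1 - j) * q ^ (j.choose 2 + j) = q ^ (n + 1) * q ^ j.choose 2 := by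
        rw [← pow_add, ← pow_add]; congr 1; omega
      calc q ^ (n + 1 - j) * qBinom q (n + 1) j * (-1 : K) ^ j * q ^ (j.choose 2 + j)
          = (q ^ (n + 1 - j) * q ^ (j.choose 2 + j)) * (qBinom q (n + 1) j * (-1 : K) ^ j) := by
            ring
        _ = (q ^ (n + 1) * q ^ j.choose 2) * (qBinom q (n + 1) j * (-1 : K) ^ j) := by rw [hpw]
        _ = q ^ (n + 1) * (qBinom q (n + 1) j * (-1 : K) ^ j * q ^ j.choose 2) := by ring
    rw [Finset.sum_congr rfl simpl, ← Finset.mul_sum]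
    -- evaluate ∑_{j ∈ range (n+1)} [n+1, j] (-1)^j q^{C(j,2)}
    have full : ∑ j ∈ range (n + 2), qBinom q (n + 1) j * (-1 : K) ^ j * q ^ j.choose 2 = 0 := by
      rw [show range (n + 2) = insert 0 (Icc 1 (n + 1)) by
        ext x; simp only [Finset.mem_insert, Finset.mem_Icc, Finset.mem_range]; omega]
      rw [Finset.sum_insert (by simp)]
      have neg : ∀ j ∈ Icc 1 (n + 1), qBinom q (n + 1) j * (-1 : K) ^ j * q ^ j.choose 2
          = -(Tq q (n + 1) 0 j) := by
        intro j hj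
        obtain ⟨hj1, _⟩ := Finset.mem_Icc.mp hj
        rw [Tq0, hsign j hj1]
        ring
      rw [Finset.sum_congr rfl neg, Finset.sum_neg_distrib, ih]
      simp [qBinom_zero hq]
    have key : ∑ j ∈ range (n + 1), qBinom q (n + 1) j * (-1 : K) ^ j * q ^ j.choose 2
        = -((-1 : K) ^ (n + 1) * q ^ ((n + 1).choose 2)) := by
      rw [Finset.sum_range_succ, qBinom_self hq] at full
      linear_combination full
    rw [key, Tq0, qBinom_self hq]
    have hch : (n + 2).choose 2 = (n + 1).choose 2 + (n + 1) := by
      rw [show n + 2 = (n + 1) + 1 by omega]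
      simp [Nat.choose_succ_succ, Nat.choose_one_right]; omega
    rw [show n + 2 - 1 = n + 1 by omega, hch, pow_add]
    ring

end DilcherAux

section DilcherMain

variable {K : Type*} [Field K] {q : K}

lemma wsum_empty (f : ℕ → K) {m lo n : ℕ} (h : n < lo) : wsum f (m + 1) lo n = 0 := by
  show (∑ j ∈ Finset.Icc lo n, f j * wsum f m j n) = 0
  rw [Finset.Icc_eq_empty (by omega), Finset.sum_empty]

lemma wsum_rec (f : ℕ → K) :
    ∀ m lo n : ℕ, lo ≤ n + 1 →
      wsum f (m + 1) lo (n + 1) = wsum f (m + 1) lo n + f (n + 1) * wsum f m lo (n + 1) := by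
  intro m
  induction m with
  | zero =>
    intro lo n h
    show (∑ j ∈ Finset.Icc lo (n + 1), f j * wsum f 0 j (n + 1))
      = (∑ j ∈ Finset.Icc lo n, f j * wsum f 0 j n) + f (n + 1) * wsum f 0 lo (n + 1)
    simp only [wsum]
    rw [Finset.sum_Icc_succ_top h]
  | succ m ihm =>
    intro lo n h
    show (∑ j ∈ Finset.Icc lo (n + 1), f j * wsum f (m + 1) j (n + 1))
      = (∑ j ∈ Finset.Icc lo n, f j * wsum f (m + 1) j n)
        + f (n + 1) * wsum f (m + 1) lo (n + 1)
    have h1 : ∀ j ∈ Finset.Icc lo (n + 1), f j * wsum f (m + 1) j (n + 1)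
        = f j * wsum f (m + 1) j n + f (n + 1) * (f j * wsum f m j (n + 1)) := by
      intro j hj
      obtain ⟨_, hj2⟩ := Finset.mem_Icc.mp hj
      rw [ihm j n hj2]
      ring
    rw [Finset.sum_congr rfl h1, Finset.sum_add_distrib, ← Finset.mul_sum,
      Finset.sum_Icc_succ_top h, wsum_empty f (by omega), mul_zero, add_zero]
    rfl

lemma dilcher_aux (hq : ∀ k : ℕ, 0 < k → q ^ k ≠ 1) :
    ∀ m n : ℕ, ∑ i ∈ Icc 1 n, Tq q n (m + 1) i
      = wsum (fun j => q ^ j / (1 - q ^ j)) (m + 1) 1 n := by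
  intro m
  induction m with
  | zero =>
    intro n
    induction n with
    | zero =>
      rw [Finset.Icc_eq_empty (by omega), Finset.sum_empty]
      show (0 : K) = ∑ j ∈ Finset.Icc 1 0, _
      rw [Finset.Icc_eq_empty (by omega), Finset.sum_empty]
    | succ n ihn =>
      rw [sum_rec hq n 0, ihn, Lzero hq n, wsum_rec _ 0 1 n (by omega)]
      show _ = _ + q ^ (n + 1) / (1 - q ^ (n + 1)) * wsum _ 0 1 (n + 1)
      show _ = _ + q ^ (n + 1) / (1 - q ^ (n + 1)) * 1
      ring
  | succ m ihm =>
    intro n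
    induction n with
    | zero =>
      rw [Finset.Icc_eq_empty (by omega), Finset.sum_empty]
      show (0 : K) = ∑ j ∈ Finset.Icc 1 0, _
      rw [Finset.Icc_eq_empty (by omega), Finset.sum_empty]
    | succ n ihn =>
      rw [sum_rec hq n (m + 1), ihn, ihm (n + 1), wsum_rec _ (m + 1) 1 n (by omega)]

end DilcherMain

/-- Dilcher's identity. -/
theorem dilcher {K : Type*} [Field K] (q : K)
    (hq : ∀ k : ℕ, 0 < k → q ^ k ≠ 1) (n m : ℕ) (hn : 1 ≤ n) (hm : 1 ≤ m) :
    ∑ i ∈ Icc 1 n, qBinom q n i * (-1 : K) ^ (i - 1) *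
        q ^ (i.choose 2 + m * i) / (1 - q ^ i) ^ m
      = wsum (fun j => q ^ j / (1 - q ^ j)) m 1 n := by
  obtain ⟨m', rfl⟩ : ∃ m', m = m' + 1 := ⟨m - 1, by omega⟩
  exact dilcher_aux hq m' n
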